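/- Let g = g₀ ⊕ g₁ be a non-degenerate filiform Lie superalgebra over ℂ with dim g₀ = 3 and dim g₁ = m ≥ 5. If g is naturally graded, then g is isomorphic to the Lie superalgebra with basis {X₀,X₁,X₂,Y₁,…,Y_m} and law [X₀,X₁] = X₂, [X₀,Y_i] = Y_{i+1} for 1 ≤ i ≤ m−1, (Y₁,Y₁) = X₂. -/

import Mathlib

/-- The sign `(-1)^(i·j)` for parities `i j : ZMod 2`, as a complex scalar. -/
def ssign (i j : ZMod 2) : ℂ := if i = 1 ∧ j = 1 then -1 else 1

@[simp] lemma ssign00 : ssign 0 0 = 1 := if_neg (by decide)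
@[simp] lemma ssign01 : ssign 0 1 = 1 := if_neg (by decide)
@[simp] lemma ssign10 : ssign 1 0 = 1 := if_neg (by decide)
@[simp] lemma ssign11 : ssign 1 1 = -1 := if_pos (by decide)

section Helpers
variable {V : Type*} [AddCommGroup V] [Module ℂ V] [FiniteDimensional ℂ V]

lemma gen_of_finrank_one (p : Submodule ℂ V) (h : Module.finrank ℂ p = 1) :
    ∃ z, z ∈ p ∧ z ≠ 0 ∧ ∀ w ∈ p, ∃ c : ℂ, w = c • z := by
  obtain ⟨v, hv0, hv⟩ := finrank_eq_one_iff'.mp h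
  refine ⟨v, v.2, by exact_mod_cast hv0, fun w hw => ?_⟩
  obtain ⟨c, hc⟩ := hv ⟨w, hw⟩
  exact ⟨c, by simpa using (congrArg Subtype.val hc).symm⟩

lemma pair_rep' (p : Submodule ℂ V) (h : Module.finrank ℂ p = 2) :
    ∃ u v : V, u ∈ p ∧ v ∈ p ∧ (∀ w ∈ p, ∃ a b : ℂ, w = a • u + b • v)
      ∧ ∀ a b : ℂ, a • u + b • v = 0 → a = 0 ∧ b = 0 := by
  let B := Module.finBasisOfFinrankEq ℂ p h
  refine ⟨B 0, B 1, (B 0).2, (B 1).2, fun w hw => ?_, fun a b hab => ?_⟩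
  · refine ⟨B.repr ⟨w, hw⟩ 0, B.repr ⟨w, hw⟩ 1, ?_⟩
    have h3 := congrArg Subtype.val (B.sum_repr ⟨w, hw⟩)
    simp only [Fin.sum_univ_two, Submodule.coe_add, Submodule.coe_smul] at h3
    exact h3.symm
  · have h0 : a • B 0 + b • B 1 = 0 := by
      apply Subtype.ext
      simpa using hab
    have h1 := Fintype.linearIndependent_iff.mp B.linearIndependent ![a, b]
      (by simpa [Fin.sum_univ_two] using h0)
    exact ⟨h1 0, h1 1⟩

lemma par (a b c d : ℂ) (h1 : ¬(a = 0 ∧ b = 0)) (h2 : ¬(c = 0 ∧ d = 0)) (h : b * c = a * d) :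
    ∃ t, t ≠ 0 ∧ c = t * a ∧ d = t * b := by
  by_cases ha : a = 0
  · have hb : b ≠ 0 := fun hb => h1 ⟨ha, hb⟩
    have hc : c = 0 := by
      have h' := h; rw [ha, zero_mul] at h'
      rcases mul_eq_zero.mp h' with h'' | h''
      exacts [absurd h'' hb, h'']
    have hd : d ≠ 0 := fun hd => h2 ⟨hc, hd⟩
    exact ⟨d / b, div_ne_zero hd hb, by rw [hc, ha, mul_zero], by field_simp⟩
  · refine ⟨c / a, ?_, by field_simp, ?_⟩
    · intro ht
      have hc : c = 0 := by
        rcases div_eq_zero_iff.mp ht with h' | h'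
        exacts [h', absurd h' ha]
      apply h2
      refine ⟨hc, ?_⟩
      rw [hc, mul_zero] at h
      rcases mul_eq_zero.mp h.symm with h' | h'
      exacts [absurd h' ha, h']
    · field_simp
      linear_combination -h

end Helpers

/-- A (complex) Lie superalgebra structure on the vector space `V`: a ℤ₂-grading
`g` whose parts are complementary, together with an even bilinear bracket which is
super skew-symmetric and satisfies the super Jacobi identity on homogeneous elements. -/
structure LieSuperAlg (V : Type*) [AddCommGroup V] [Module ℂ V] where
  g : ZMod 2 → Submodule ℂ V
  bk : V →ₗ[ℂ] V →ₗ[ℂ] V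
  compl : IsCompl (g 0) (g 1)
  grading : ∀ i j : ZMod 2, ∀ x ∈ g i, ∀ y ∈ g j, bk x y ∈ g (i + j)
  skew : ∀ i j : ZMod 2, ∀ x ∈ g i, ∀ y ∈ g j, bk x y = -(ssign i j • bk y x)
  jacobi : ∀ i j k : ZMod 2, ∀ x ∈ g i, ∀ y ∈ g j, ∀ z ∈ g k,
    ssign k i • bk x (bk y z) + ssign i j • bk y (bk z x) + ssign j k • bk z (bk x y) = 0

namespace LieSuperAlg

variable {V : Type*} [AddCommGroup V] [Module ℂ V]

/-- The descending sequences `C⁰(g_i) = g_i`, `C^{k+1}(g_i) = [g₀, C^k(g_i)]`. -/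
def C (A : LieSuperAlg V) (i : ZMod 2) : ℕ → Submodule ℂ V
  | 0 => A.g i
  | k + 1 => Submodule.span ℂ {z | ∃ x ∈ A.g 0, ∃ y ∈ C A i k, z = A.bk x y}

/-- The descending central sequence of the whole superalgebra. -/
def DC (A : LieSuperAlg V) : ℕ → Submodule ℂ V
  | 0 => ⊤
  | k + 1 => Submodule.span ℂ {z | ∃ x ∈ DC A k, ∃ y : V, z = A.bk x y}

/-- Nilpotency: the descending central sequence reaches zero. -/
def IsNilpotent (A : LieSuperAlg V) : Prop := ∃ k, A.DC k = ⊥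

/-- `A` is filiform with parameters `(n, m)`: it is nilpotent, `dim g₀ = n + 1`,
`dim g₁ = m`, and the super-nilindex is `(n, m)` (the maximal one). -/
def IsFiliform (A : LieSuperAlg V) (n m : ℕ) : Prop :=
  A.IsNilpotent ∧ Module.finrank ℂ (A.g 0) = n + 1 ∧ Module.finrank ℂ (A.g 1) = m ∧
    A.C 0 (n - 1) ≠ ⊥ ∧ A.C 1 (m - 1) ≠ ⊥ ∧ A.C 0 n = ⊥ ∧ A.C 1 m = ⊥

/-- Non-degeneracy: the bracket does not vanish identically on `g₁ × g₁`. -/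
def NonDegenerate (A : LieSuperAlg V) : Prop :=
  ∃ x ∈ A.g 1, ∃ y ∈ A.g 1, A.bk x y ≠ 0

/-- `A` is naturally graded: there are subspaces `W a i` (`i ≥ 1`, parity `a`), splitting
the filtrations `C` (so that `W a i ≅ C^{i-1}(g_a)/C^i(g_a)` and `g ≅ gr(g)` in the
natural way) and compatible with the bracket (so `gr(g)` is a graded Lie superalgebra,
`[gⁱ, gʲ] ⊆ g^{i+j}`).  For finite-dimensional nilpotent superalgebras this is
equivalent to the textbook definition `g ≅ gr(g)` with `gr(g)` graded. -/
def NaturallyGraded (A : LieSuperAlg V) : Prop :=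
  ∃ W : ZMod 2 → ℕ → Submodule ℂ V,
    (∀ a, W a 0 = ⊥) ∧
    (∀ a k, A.C a k = W a (k + 1) ⊔ A.C a (k + 1)) ∧
    (∀ a k, W a (k + 1) ⊓ A.C a (k + 1) = ⊥) ∧
    (∀ a b : ZMod 2, ∀ i j : ℕ, ∀ x ∈ W a i, ∀ y ∈ W b j, A.bk x y ∈ W (a + b) (i + j))

/-- `X 0, …, X n` and `Y 1, …, Y m` form an adapted basis of the superalgebra:
the `X i` are even, the `Y j` are odd, and together they form a basis of `V`. -/
def IsAdaptedBasis (A : LieSuperAlg V) (n m : ℕ) (X Y : ℕ → V) : Prop :=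
  (∀ i, i ≤ n → X i ∈ A.g 0) ∧ (∀ j, 1 ≤ j → j ≤ m → Y j ∈ A.g 1) ∧
  LinearIndependent ℂ
    (Sum.elim (fun i : Fin (n + 1) => X i.val) (fun j : Fin m => Y (j.val + 1))) ∧
  Submodule.span ℂ
    (Set.range (Sum.elim (fun i : Fin (n + 1) => X i.val) (fun j : Fin m => Y (j.val + 1)))) = ⊤

end LieSuperAlg

/-- The law `L^{2,m} + φ₁₂`: `[X₀,X₁] = X₂`, `[X₀,Y_j] = Y_{j+1}` for
`1 ≤ j ≤ m-1`, `(Y₁,Y₁) = X₂`, all other products of basis elements being zero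
(the `[Y,X]` products are determined by super skew-symmetry). -/
def LawL2m {V : Type*} [AddCommGroup V] [Module ℂ V] (A : LieSuperAlg V) (m : ℕ) : Prop :=
  ∃ X Y : ℕ → V, A.IsAdaptedBasis 2 m X Y ∧
    (∀ i j : ℕ, i ≤ 2 → j ≤ 2 → A.bk (X i) (X j) =
      if i = 0 ∧ j = 1 then X 2 else if i = 1 ∧ j = 0 then -X 2 else 0) ∧
    (∀ i j : ℕ, i ≤ 2 → 1 ≤ j → j ≤ m → A.bk (X i) (Y j) =
      if i = 0 ∧ j + 1 ≤ m then Y (j + 1) else 0) ∧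
    (∀ i j : ℕ, 1 ≤ i → i ≤ m → 1 ≤ j → j ≤ m → A.bk (Y i) (Y j) =
      if i = 1 ∧ j = 1 then X 2 else 0)

/-- Every non-degenerate naturally graded filiform Lie superalgebra with
`dim g₀ = 3` and `dim g₁ = m` as indicated is isomorphic to `L^{2,m} + φ₁₂`. -/
theorem stmt3 {V : Type*} [AddCommGroup V] [Module ℂ V] [FiniteDimensional ℂ V] (A : LieSuperAlg V) (m : ℕ)
    (hm : 5 ≤ m)
    (hfil : A.IsFiliform 2 m) (hnd : A.NonDegenerate) (hng : A.NaturallyGraded) :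
    LawL2m A m := by
  obtain ⟨W, hWz, hC, hWind, hWgr⟩ := hng
  obtain ⟨-, hg0, hg1, hC01ne, hC1ne, hC02, hC1m⟩ := hfil
  -- ## Part A : structural facts about the filtration
  have hCdef : ∀ (a : ZMod 2) k, A.C a (k+1)
      = Submodule.span ℂ {z | ∃ x ∈ A.g 0, ∃ y ∈ A.C a k, z = A.bk x y} := fun a k => rfl
  have hC0 : ∀ a : ZMod 2, A.C a 0 = A.g a := fun a => rfl
  have hCdec : ∀ (a : ZMod 2) k, A.C a (k+1) ≤ A.C a k := fun a k => by
    rw [hC a k]; exact le_sup_right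
  have hCg : ∀ (a : ZMod 2) k, A.C a k ≤ A.g a := by
    intro a k
    induction k with
    | zero => exact le_rfl
    | succ n ih => exact le_trans (hCdec a n) ih
  have hCbot0 : ∀ k, 2 ≤ k → A.C 0 k = ⊥ := by
    intro k hk
    induction k with
    | zero => omega
    | succ n ih =>
      rcases Nat.lt_or_ge n 2 with h | h
      · have : n + 1 = 2 := by omega
        rw [this]; exact hC02
      · exact le_bot_iff.mp ((hCdec 0 n).trans_eq (ih h))
  have hCbot1 : ∀ k, m ≤ k → A.C 1 k = ⊥ := by
    intro k hk
    induction k with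
    | zero => rw [Nat.le_zero.mp hk] at hC1m; exact hC1m
    | succ n ih =>
      rcases Nat.lt_or_ge n m with h | h
      · have : n + 1 = m := by omega
        rw [this]; exact hC1m
      · exact le_bot_iff.mp ((hCdec 1 n).trans_eq (ih h))
  have hWC : ∀ (a : ZMod 2) k, W a (k+1) ≤ A.C a k := fun a k => by
    rw [hC a k]; exact le_sup_left
  have hWb0 : ∀ k, 3 ≤ k → W 0 k = ⊥ := by
    intro k hk
    obtain ⟨n, rfl⟩ : ∃ n, k = n + 1 := ⟨k - 1, by omega⟩
    exact le_bot_iff.mp ((hWC 0 n).trans_eq (hCbot0 n (by omega)))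
  have hWb1 : ∀ k, m + 1 ≤ k → W 1 k = ⊥ := by
    intro k hk
    obtain ⟨n, rfl⟩ : ∃ n, k = n + 1 := ⟨k - 1, by omega⟩
    exact le_bot_iff.mp ((hWC 1 n).trans_eq (hCbot1 n (by omega)))
  have hWsub : ∀ (a : ZMod 2) k, W a k ≤ A.g a := by
    intro a k
    cases k with
    | zero => rw [hWz a]; exact bot_le
    | succ n => exact (hWC a n).trans (hCg a n)
  -- skew-symmetry consequences
  have hskew_ee : ∀ x ∈ A.g 0, ∀ y ∈ A.g 0, A.bk y x = - A.bk x y := by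
    intro x hx y hy
    have := A.skew 0 0 y hy x hx
    simpa using this
  have hsq_ee : ∀ x ∈ A.g 0, A.bk x x = 0 := by
    intro x hx
    have h := hskew_ee x hx x hx
    have : (2:ℂ) • A.bk x x = 0 := by
      rw [two_smul]
      nth_rewrite 1 [h]
      simp
    simpa using this
  have hskew_eo : ∀ x ∈ A.g 0, ∀ y ∈ A.g 1, A.bk y x = - A.bk x y := by
    intro x hx y hy
    have := A.skew 1 0 y hy x hx
    simpa using this
  have hsymm_oo : ∀ x ∈ A.g 1, ∀ y ∈ A.g 1, A.bk y x = A.bk x y := by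
    intro x hx y hy
    have := A.skew 1 1 y hy x hx
    simpa using this
  -- ## Part B : dimensions
  have hC01ne' : A.C 0 1 ≠ ⊥ := by simpa using hC01ne
  have hfr : ∀ (a : ZMod 2) k, Module.finrank ℂ (A.C a k)
      = Module.finrank ℂ (W a (k+1)) + Module.finrank ℂ (A.C a (k+1)) := by
    intro a k
    have h1 := Submodule.finrank_sup_add_finrank_inf_eq (W a (k+1)) (A.C a (k+1))
    rw [hWind a k, ← hC a k, finrank_bot] at h1
    simpa using h1
  have hfrN : ∀ (a : ZMod 2) k l, k + 1 = l → Module.finrank ℂ (A.C a k)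
      = Module.finrank ℂ (W a l) + Module.finrank ℂ (A.C a l) := by
    intro a k l h
    subst h; exact hfr a k
  have frne : ∀ p : Submodule ℂ V, p ≠ ⊥ → 1 ≤ Module.finrank ℂ p := by
    intro p hp
    rw [Nat.one_le_iff_ne_zero]
    exact fun h => hp (Submodule.finrank_eq_zero.mp h)
  have hC01fr : Module.finrank ℂ (A.C 0 1) = Module.finrank ℂ (W 0 2) := by
    have h := hfrN 0 1 2 rfl; rwa [hCbot0 2 le_rfl, finrank_bot, add_zero] at h
  have hsum0 : Module.finrank ℂ (W 0 1) + Module.finrank ℂ (W 0 2) = 3 := by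
    have h := hfrN 0 0 1 rfl
    rw [hC0 0, hg0, hC01fr] at h
    omega
  have hg0dec : ∀ x ∈ A.g 0, ∃ x1 ∈ W 0 1, ∃ x2 ∈ W 0 2, x = x1 + x2 := by
    intro x hx
    have h1 : x ∈ W 0 1 ⊔ A.C 0 1 := by rw [← hC 0 0]; exact hx
    obtain ⟨x1, hx1, r, hr, hxe⟩ := Submodule.mem_sup.mp h1
    have h2 : r ∈ W 0 2 ⊔ A.C 0 2 := by rw [← hC 0 1]; exact hr
    rw [hCbot0 2 le_rfl, sup_bot_eq] at h2
    exact ⟨x1, hx1, r, h2, hxe.symm⟩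
  have hbk_g0_W02 : ∀ x ∈ A.g 0, ∀ t ∈ W 0 2, A.bk x t = 0 := by
    intro x hx t ht
    obtain ⟨x1, hx1, x2, hx2, rfl⟩ := hg0dec x hx
    have h1 : A.bk x1 t ∈ W 0 3 := by
      have h := hWgr 0 0 1 2 x1 hx1 t ht
      norm_num at h
      exact h
    have h2 : A.bk x2 t ∈ W 0 4 := by
      have h := hWgr 0 0 2 2 x2 hx2 t ht
      norm_num at h
      exact h
    rw [hWb0 3 (by omega), Submodule.mem_bot] at h1
    rw [hWb0 4 (by omega), Submodule.mem_bot] at h2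
    rw [map_add, LinearMap.add_apply, h1, h2, add_zero]
  have hfrW01ge : 2 ≤ Module.finrank ℂ (W 0 1) := by
    by_contra hlt
    push_neg at hlt
    have hle1 : Module.finrank ℂ (W 0 1) ≤ 1 := by omega
    obtain ⟨v, hv⟩ := finrank_le_one_iff.mp hle1
    apply hC01ne'
    rw [← le_bot_iff, hCdef 0 0, Submodule.span_le]
    rintro z ⟨x, hx, y, hy, rfl⟩
    rw [hC0 0] at hy
    obtain ⟨x1, hx1, x2, hx2, rfl⟩ := hg0dec x hx
    obtain ⟨y1, hy1, y2, hy2, rfl⟩ := hg0dec y hy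
    obtain ⟨a, ha⟩ := hv ⟨x1, hx1⟩
    obtain ⟨b, hb⟩ := hv ⟨y1, hy1⟩
    have hvV : (v:V) ∈ A.g 0 := hWsub 0 1 v.2
    have ha' : x1 = a • (v:V) := by simpa using (congrArg Subtype.val ha).symm
    have hb' : y1 = b • (v:V) := by simpa using (congrArg Subtype.val hb).symm
    have e11 : A.bk x1 y1 = 0 := by
      rw [ha', hb']
      simp only [map_smul, LinearMap.smul_apply]
      rw [hsq_ee (v:V) hvV]
      simp
    have e12 : A.bk x1 y2 = 0 := hbk_g0_W02 x1 (hWsub 0 1 hx1) y2 hy2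
    have e22 : A.bk x2 y2 = 0 := hbk_g0_W02 x2 (hWsub 0 2 hx2) y2 hy2
    have e21 : A.bk x2 y1 = 0 := by
      rw [hskew_ee y1 (hWsub 0 1 hy1) x2 (hWsub 0 2 hx2),
        hbk_g0_W02 y1 (hWsub 0 1 hy1) x2 hx2, neg_zero]
    simp only [SetLike.mem_coe, Submodule.mem_bot, map_add, LinearMap.add_apply,
      e11, e12, e21, e22, add_zero, zero_add]
  have hfrW02 : Module.finrank ℂ (W 0 2) = 1 := by
    have h1 : 1 ≤ Module.finrank ℂ (W 0 2) := by
      rw [← hC01fr]; exact frne _ hC01ne'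
    omega
  have hfrW01 : Module.finrank ℂ (W 0 1) = 2 := by omega
  -- odd part dimensions
  have hstall : ∀ j, A.C 1 j = A.C 1 (j+1) → ∀ t, A.C 1 (j+t) = A.C 1 (j+t+1) := by
    intro j h t
    induction t with
    | zero => exact h
    | succ n ih =>
      show A.C 1 (j+n+1) = A.C 1 (j+n+1+1)
      rw [hCdef 1 (j+n), hCdef 1 (j+n+1), ih]
  have hWb1' : ∀ k, 1 ≤ k → k ≤ m → W 1 k ≠ ⊥ := by
    intro k h1 h2 hbot
    have he : A.C 1 (k-1) = A.C 1 (k-1+1) := by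
      have h := hC 1 (k-1)
      rw [show k - 1 + 1 = k by omega] at h ⊢
      rw [hbot, bot_sup_eq] at h
      exact h
    have heq : ∀ t, A.C 1 (k-1) = A.C 1 (k-1+t) := by
      intro t
      induction t with
      | zero => rfl
      | succ n ih => rw [ih]; exact hstall (k-1) he n
    have hbotm : A.C 1 (k-1) = ⊥ := by
      have h := heq (m - (k-1))
      rw [show k - 1 + (m - (k-1)) = m by omega] at h
      rw [h]; exact hC1m
    apply hC1ne
    have hle : A.C 1 (m-1) ≤ A.C 1 (k-1) := by
      have hmono : ∀ t, A.C 1 (k-1+t) ≤ A.C 1 (k-1) := by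
        intro t
        induction t with
        | zero => exact le_rfl
        | succ n ih => exact (hCdec 1 (k-1+n)).trans ih
      have h := hmono (m - k)
      rw [show k - 1 + (m - k) = m - 1 by omega] at h
      exact h
    rw [← le_bot_iff]
    exact hle.trans_eq hbotm
  have hfrC1up : ∀ k, k ≤ m → Module.finrank ℂ (A.C 1 k) ≤ m - k := by
    intro k
    induction k with
    | zero => intro _; rw [hC0 1, hg1]; omega
    | succ n ih =>
      intro hn
      have h := hfr 1 n
      have h1 : 1 ≤ Module.finrank ℂ (W 1 (n+1)) :=
        frne _ (hWb1' (n+1) (by omega) hn)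
      have h2 := ih (by omega)
      omega
  have hfrC1low : ∀ t, t ≤ m → t ≤ Module.finrank ℂ (A.C 1 (m - t)) := by
    intro t
    induction t with
    | zero => intro _; omega
    | succ n ih =>
      intro hn
      have h := hfrN 1 (m - (n+1)) (m - n) (by omega)
      have h1 : 1 ≤ Module.finrank ℂ (W 1 (m - n)) :=
        frne _ (hWb1' (m-n) (by omega) (by omega))
      have h2 := ih (by omega)
      omega
  have hfrC1 : ∀ k, k ≤ m → Module.finrank ℂ (A.C 1 k) = m - k := by
    intro k hk
    have h1 := hfrC1up k hk
    have h2 := hfrC1low (m - k) (by omega)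
    rw [show m - (m - k) = k by omega] at h2
    omega
  have hfrW1 : ∀ k, 1 ≤ k → k ≤ m → Module.finrank ℂ (W 1 k) = 1 := by
    intro k h1 h2
    have h := hfrN 1 (k-1) k (by omega)
    rw [hfrC1 (k-1) (by omega), hfrC1 k h2] at h
    omega
  -- ## Part C : generators and basic bracket computations
  obtain ⟨u, v, hu, hv, hrep, hindep⟩ := pair_rep' (W 0 1) hfrW01
  obtain ⟨T, hT, hTne, hTgen⟩ := gen_of_finrank_one (W 0 2) hfrW02
  have hZex : ∀ k : ℕ, ∃ z, 1 ≤ k → k ≤ m →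
      z ∈ W 1 k ∧ z ≠ 0 ∧ ∀ w ∈ W 1 k, ∃ c : ℂ, w = c • z := by
    intro k
    by_cases h : 1 ≤ k ∧ k ≤ m
    · obtain ⟨z, h1, h2, h3⟩ := gen_of_finrank_one (W 1 k) (hfrW1 k h.1 h.2)
      exact ⟨z, fun _ _ => ⟨h1, h2, h3⟩⟩
    · exact ⟨0, fun h1 h2 => absurd ⟨h1, h2⟩ h⟩
  choose Z hZ using hZex
  have hZW : ∀ k, 1 ≤ k → k ≤ m → Z k ∈ W 1 k := fun k h1 h2 => (hZ k h1 h2).1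
  have hZne : ∀ k, 1 ≤ k → k ≤ m → Z k ≠ 0 := fun k h1 h2 => (hZ k h1 h2).2.1
  have hZgen : ∀ k, 1 ≤ k → k ≤ m → ∀ w ∈ W 1 k, ∃ c : ℂ, w = c • Z k :=
    fun k h1 h2 => (hZ k h1 h2).2.2
  have hZg1 : ∀ k, 1 ≤ k → k ≤ m → Z k ∈ A.g 1 := fun k h1 h2 => hWsub 1 k (hZW k h1 h2)
  -- graded bracket specializations
  have hbk01 : ∀ (i j : ℕ), ∀ x ∈ W 0 i, ∀ y ∈ W 1 j, A.bk x y ∈ W 1 (i + j) := by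
    intro i j x hx y hy
    have h := hWgr 0 1 i j x hx y hy
    rwa [show (0:ZMod 2) + 1 = 1 by decide] at h
  have hbk11 : ∀ (i j : ℕ), ∀ x ∈ W 1 i, ∀ y ∈ W 1 j, A.bk x y ∈ W 0 (i + j) := by
    intro i j x hx y hy
    have h := hWgr 1 1 i j x hx y hy
    rwa [show (1:ZMod 2) + 1 = 0 by decide] at h
  have hbk00 : ∀ (i j : ℕ), ∀ x ∈ W 0 i, ∀ y ∈ W 0 j, A.bk x y ∈ W 0 (i + j) := by
    intro i j x hx y hy
    have h := hWgr 0 0 i j x hx y hy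
    rwa [show (0:ZMod 2) + 0 = 0 by decide] at h
  -- products of two odd basis vectors of high weight vanish
  have oddW : ∀ p q : ℕ, 3 ≤ p + q → ∀ x ∈ W 1 p, ∀ y ∈ W 1 q, A.bk x y = 0 := by
    intro p q hpq x hx y hy
    have h := hbk11 p q x hx y hy
    rw [hWb0 (p+q) hpq, Submodule.mem_bot] at h
    exact h
  have S1 : ∀ t j, m ≤ j + t → ∀ k, 1 ≤ k → 2 ≤ k + j →
      ∀ x ∈ W 1 k, ∀ y ∈ A.C 1 j, A.bk x y = 0 := by
    intro t
    induction t with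
    | zero =>
      intro j hj k _ _ x _ y hy
      rw [hCbot1 j (by omega), Submodule.mem_bot] at hy
      rw [hy, map_zero]
    | succ n ih =>
      intro j hj k hk1 hk2 x hx y hy
      by_cases hmj : m ≤ j
      · rw [hCbot1 j hmj, Submodule.mem_bot] at hy
        rw [hy, map_zero]
      · rw [hC 1 j] at hy
        obtain ⟨y1, hy1, y2, hy2, rfl⟩ := Submodule.mem_sup.mp hy
        rw [map_add]
        rw [oddW k (j+1) (by omega) x hx y1 hy1,
          ih (j+1) (by omega) k hk1 (by omega) x hx y2 hy2, add_zero]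
  have S2 : ∀ i j, 1 ≤ i + j → ∀ x ∈ A.C 1 i, ∀ y ∈ A.C 1 j, A.bk x y = 0 := by
    have key : ∀ t i j, m ≤ i + t → 1 ≤ i + j →
        ∀ x ∈ A.C 1 i, ∀ y ∈ A.C 1 j, A.bk x y = 0 := by
      intro t
      induction t with
      | zero =>
        intro i j hi _ x hx y _
        rw [hCbot1 i (by omega), Submodule.mem_bot] at hx
        rw [hx, map_zero, LinearMap.zero_apply]
      | succ n ih =>
        intro i j hi hij x hx y hy
        by_cases hmi : m ≤ i
        · rw [hCbot1 i hmi, Submodule.mem_bot] at hx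
          rw [hx, map_zero, LinearMap.zero_apply]
        · rw [hC 1 i] at hx
          obtain ⟨x1, hx1, x2, hx2, rfl⟩ := Submodule.mem_sup.mp hx
          rw [map_add, LinearMap.add_apply]
          rw [S1 m j (by omega) (i+1) (by omega) (by omega) x1 hx1 y hy,
            ih (i+1) j (by omega) (by omega) x2 hx2 y hy, add_zero]
    exact fun i j hij => key m i j (by omega) hij
  -- Jacobi identity in the two needed parity patterns
  have jac_eeo : ∀ x ∈ A.g 0, ∀ y ∈ A.g 0, ∀ z ∈ A.g 1,
      A.bk x (A.bk y z) + A.bk y (A.bk z x) + A.bk z (A.bk x y) = 0 := by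
    intro x hx y hy z hz
    have h := A.jacobi 0 0 1 x hx y hy z hz
    simpa using h
  have jac_ooo : ∀ x ∈ A.g 1, ∀ y ∈ A.g 1, ∀ z ∈ A.g 1,
      A.bk x (A.bk y z) + A.bk y (A.bk z x) + A.bk z (A.bk x y) = 0 := by
    intro x hx y hy z hz
    have h := A.jacobi 1 1 1 x hx y hy z hz
    simp only [ssign11, neg_smul, one_smul] at h
    have h2 : -(A.bk x (A.bk y z) + A.bk y (A.bk z x) + A.bk z (A.bk x y)) = -0 := by
      rw [neg_zero, neg_add, neg_add]; linear_combination (norm := module) h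
    exact neg_injective h2
  -- ## Part C2 : the coefficient c, vanishing of [T, Z k], ω, α, β
  have hZ1W : Z 1 ∈ W 1 1 := hZW 1 le_rfl (by omega)
  have hZ11 : A.bk (Z 1) (Z 1) ∈ W 0 2 := by
    have h := hbk11 1 1 (Z 1) hZ1W (Z 1) hZ1W
    rwa [show (1:ℕ) + 1 = 2 from rfl] at h
  obtain ⟨c, hc⟩ := hTgen _ hZ11
  -- non-degeneracy forces c ≠ 0
  have hcne : c ≠ 0 := by
    intro h0
    obtain ⟨x, hx, y, hy, hne⟩ := hnd
    apply hne
    have hx' : x ∈ W 1 1 ⊔ A.C 1 1 := by rw [← hC 1 0, hC0 1]; exact hx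
    have hy' : y ∈ W 1 1 ⊔ A.C 1 1 := by rw [← hC 1 0, hC0 1]; exact hy
    obtain ⟨x1, hx1, x2, hx2, rfl⟩ := Submodule.mem_sup.mp hx'
    obtain ⟨y1, hy1, y2, hy2, rfl⟩ := Submodule.mem_sup.mp hy'
    obtain ⟨a, rfl⟩ := hZgen 1 le_rfl (by omega) x1 hx1
    obtain ⟨b, rfl⟩ := hZgen 1 le_rfl (by omega) y1 hy1
    have e1 : A.bk (Z 1) y2 = 0 :=
      S2 0 1 (by omega) (Z 1) (by rw [hC0 1]; exact hZg1 1 le_rfl (by omega)) y2 hy2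
    have e2a : A.bk x2 (Z 1) = 0 :=
      S2 1 0 (by omega) x2 hx2 (Z 1) (by rw [hC0 1]; exact hZg1 1 le_rfl (by omega))
    have e2b : A.bk x2 y2 = 0 := S2 1 1 (by omega) x2 hx2 y2 hy2
    simp only [map_add, map_smul, LinearMap.add_apply, LinearMap.smul_apply,
      e1, e2a, e2b, hc, h0, zero_smul, smul_zero, add_zero, zero_add]
  -- [T, Z k] = 0 for all k
  have hZT : ∀ k, 1 ≤ k → k ≤ m → A.bk (Z k) T = 0 := by
    intro k h1 h2
    have hj := jac_ooo (Z 1) (hZg1 1 le_rfl (by omega)) (Z 1) (hZg1 1 le_rfl (by omega))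
      (Z k) (hZg1 k h1 h2)
    rcases Nat.lt_or_ge k 2 with hk2 | hk2
    · have hk1 : k = 1 := by omega
      subst hk1
      rw [hc, map_smul] at hj
      have h3 : (3 * c) • A.bk (Z 1) T = 0 := by
        rw [show (3:ℂ) * c = c + c + c by ring, add_smul, add_smul]
        exact hj
      rcases smul_eq_zero.mp h3 with h | h
      · rcases mul_eq_zero.mp h with h' | h'
        · norm_num at h'
        · exact absurd h' hcne
      · exact h
    · have e1 : A.bk (Z 1) (Z k) = 0 := oddW 1 k (by omega) (Z 1) hZ1W (Z k) (hZW k h1 h2)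
      have e2 : A.bk (Z k) (Z 1) = 0 := oddW k 1 (by omega) (Z k) (hZW k h1 h2) (Z 1) hZ1W
      simp only [e1, e2, map_zero, hc, map_smul, zero_add] at hj
      have := smul_eq_zero.mp hj
      tauto
  have hTZ : ∀ k, 1 ≤ k → k ≤ m → A.bk T (Z k) = 0 := by
    intro k h1 h2
    have h := hskew_eo T (hWsub 0 2 hT) (Z k) (hZg1 k h1 h2)
    -- h : bk (Z k) T = - bk T (Z k)
    have h' := hZT k h1 h2
    rw [h] at h'
    simpa using h'
  -- ω : the even structure constant
  have hUVW : A.bk u v ∈ W 0 2 := by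
    have h := hbk00 1 1 u hu v hv
    rwa [show (1:ℕ) + 1 = 2 from rfl] at h
  obtain ⟨ω, hω⟩ := hTgen _ hUVW
  have hug : u ∈ A.g 0 := hWsub 0 1 hu
  have hvg : v ∈ A.g 0 := hWsub 0 1 hv
  have hωne : ω ≠ 0 := by
    intro h0
    apply hC01ne'
    rw [← le_bot_iff, hCdef 0 0, Submodule.span_le]
    rintro z ⟨x, hx, y, hy, rfl⟩
    rw [hC0 0] at hy
    obtain ⟨x1, hx1, x2, hx2, rfl⟩ := hg0dec x hx
    obtain ⟨y1, hy1, y2, hy2, rfl⟩ := hg0dec y hy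
    obtain ⟨a1, b1, rfl⟩ := hrep x1 hx1
    obtain ⟨a2, b2, rfl⟩ := hrep y1 hy1
    have exy : A.bk (a1 • u + b1 • v) (a2 • u + b2 • v) = 0 := by
      have hvu : A.bk v u = -(ω • T) := by rw [hskew_ee u hug v hvg, hω]
      simp only [map_add, map_smul, LinearMap.add_apply, LinearMap.smul_apply,
        hsq_ee u hug, hsq_ee v hvg, hω, hvu, h0, zero_smul, smul_zero, add_zero, zero_add,
        smul_neg, neg_zero]
    have e12 : A.bk (a1 • u + b1 • v) y2 = 0 :=
      hbk_g0_W02 _ (hWsub 0 1 hx1) y2 hy2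
    have e22 : A.bk x2 y2 = 0 := hbk_g0_W02 x2 (hWsub 0 2 hx2) y2 hy2
    have e21 : A.bk x2 (a2 • u + b2 • v) = 0 := by
      rw [hskew_ee _ (hWsub 0 1 hy1) x2 (hWsub 0 2 hx2),
        hbk_g0_W02 _ (hWsub 0 1 hy1) x2 hx2, neg_zero]
    rw [SetLike.mem_coe, Submodule.mem_bot]
    have expand : A.bk ((a1 • u + b1 • v) + x2) ((a2 • u + b2 • v) + y2)
        = A.bk (a1 • u + b1 • v) (a2 • u + b2 • v) + A.bk (a1 • u + b1 • v) y2
          + A.bk x2 (a2 • u + b2 • v) + A.bk x2 y2 := by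
      simp only [map_add, LinearMap.add_apply]
      abel
    rw [expand, exy, e12, e21, e22]
    simp
  -- the structure functionals α, β
  have hαex : ∀ w ∈ W 0 1, ∀ k : ℕ, ∃ a : ℂ, 1 ≤ k → k + 1 ≤ m →
      A.bk w (Z k) = a • Z (k+1) := by
    intro w hw k
    by_cases h : 1 ≤ k ∧ k + 1 ≤ m
    · have hmem : A.bk w (Z k) ∈ W 1 (k+1) := by
        have h2 := hbk01 1 k w hw (Z k) (hZW k h.1 (by omega))
        rwa [show 1 + k = k + 1 by omega] at h2
      obtain ⟨a, ha⟩ := hZgen (k+1) (by omega) h.2 _ hmem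
      exact ⟨a, fun _ _ => ha⟩
    · exact ⟨0, fun h1 h2 => absurd ⟨h1, h2⟩ h⟩
  choose α hα using hαex u hu
  choose β hβ using hαex v hv
  have hαβ : ∀ k, 1 ≤ k → k + 1 ≤ m → ¬(α k = 0 ∧ β k = 0) := by
    rintro k h1 h2 ⟨ha0, hb0⟩
    obtain ⟨k', rfl⟩ : ∃ k', k = k' + 1 := ⟨k - 1, by omega⟩
    have hkill : ∀ x ∈ W 0 1, A.bk x (Z (k'+1)) = 0 := by
      intro x hx
      obtain ⟨a, b, rfl⟩ := hrep x hx
      simp only [map_add, map_smul, LinearMap.add_apply, LinearMap.smul_apply,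
        hα (k'+1) h1 h2, hβ (k'+1) h1 h2, ha0, hb0, zero_smul, smul_zero, add_zero]
    have hle : A.C 1 (k'+1) ≤ A.C 1 (k'+2) := by
      rw [hCdef 1 k', Submodule.span_le]
      rintro z ⟨x, hx, y, hy, rfl⟩
      have hy' : y ∈ W 1 (k'+1) ⊔ A.C 1 (k'+1) := by rw [← hC 1 k']; exact hy
      obtain ⟨y1, hy1, y2, hy2, rfl⟩ := Submodule.mem_sup.mp hy'
      rw [SetLike.mem_coe, map_add]
      refine Submodule.add_mem _ ?_ ?_
      · -- A.bk x y1 with y1 a multiple of Z (k'+1)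
        obtain ⟨a, rfl⟩ := hZgen (k'+1) h1 (by omega) y1 hy1
        obtain ⟨x1, hx1, x2, hx2, rfl⟩ := hg0dec x hx
        rw [map_add, LinearMap.add_apply]
        refine Submodule.add_mem _ ?_ ?_
        · rw [map_smul, hkill x1 hx1, smul_zero]
          exact Submodule.zero_mem _
        · have hmem : A.bk x2 (a • Z (k'+1)) ∈ W 1 (k'+3) := by
            have hz : a • Z (k'+1) ∈ W 1 (k'+1) :=
              Submodule.smul_mem _ a (hZW (k'+1) h1 (by omega))
            have h3 := hbk01 2 (k'+1) x2 hx2 _ hz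
            rwa [show 2 + (k'+1) = k'+3 by omega] at h3
          exact (hWC 1 (k'+2)) hmem
      · -- A.bk x y2 with y2 ∈ C 1 (k'+1)
        rw [hCdef 1 (k'+1)]
        exact Submodule.subset_span ⟨x, hx, y2, hy2, rfl⟩
    have hr1 := hfrC1 (k'+1) (by omega)
    have hr2 := hfrC1 (k'+2) (by omega)
    have := Submodule.finrank_mono hle
    omega
  -- ## Part C3 : Jacobi relation between α and β, parallelism
  have jacrel : ∀ k, 1 ≤ k → k + 2 ≤ m → β k * α (k+1) = α k * β (k+1) := by
    intro k h1 h2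
    have hZkg := hZg1 k h1 (by omega)
    have hj := jac_eeo u hug v hvg (Z k) hZkg
    have t1 : A.bk u (A.bk v (Z k)) = (β k * α (k+1)) • Z (k+2) := by
      rw [hβ k h1 (by omega), map_smul, hα (k+1) (by omega) (by omega), smul_smul,
        show k+1+1 = k+2 from rfl]
    have t2 : A.bk v (A.bk (Z k) u) = -((α k * β (k+1)) • Z (k+2)) := by
      rw [hskew_eo u hug (Z k) hZkg, hα k h1 (by omega), map_neg, map_smul,
        hβ (k+1) (by omega) (by omega), smul_smul, show k+1+1 = k+2 from rfl]
    have t3 : A.bk (Z k) (A.bk u v) = 0 := by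
      rw [hω, map_smul, hZT k h1 (by omega), smul_zero]
    rw [t1, t2, t3, add_zero] at hj
    have hz : (β k * α (k+1) - α k * β (k+1)) • Z (k+2) = 0 := by
      rw [sub_smul, sub_eq_add_neg]; exact hj
    rcases smul_eq_zero.mp hz with h | h
    · exact sub_eq_zero.mp h
    · exact absurd h (hZne (k+2) (by omega) h2)
  have hlamex : ∀ k : ℕ, ∃ t : ℂ, 1 ≤ k → k + 1 ≤ m →
      t ≠ 0 ∧ α k = t * α 1 ∧ β k = t * β 1 := by
    intro k
    induction k with
    | zero => exact ⟨0, by omega⟩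
    | succ n ih =>
      by_cases hn : 1 ≤ n
      · by_cases hnm : n + 2 ≤ m
        · obtain ⟨t, ht⟩ := ih
          obtain ⟨htne, hta, htb⟩ := ht hn (by omega)
          obtain ⟨s, hsne, hsa, hsb⟩ := par (α n) (β n) (α (n+1)) (β (n+1))
            (fun hh => hαβ n hn (by omega) hh) (fun hh => hαβ (n+1) (by omega) hnm hh)
            (jacrel n hn hnm)
          exact ⟨s * t, fun _ _ => ⟨mul_ne_zero hsne htne,
            by rw [hsa, hta]; ring, by rw [hsb, htb]; ring⟩⟩
        · exact ⟨0, fun _ h2 => absurd h2 (by omega)⟩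
      · have hn0 : n = 0 := by omega
        subst hn0
        exact ⟨1, fun _ _ => ⟨one_ne_zero, by ring, by ring⟩⟩
  choose lam hlam using hlamex
  -- ## Part D : the adapted basis vectors
  set δ : ℂ := if α 1 = 0 then β 1 else α 1 with hδ
  have hδne : δ ≠ 0 := by
    rw [hδ]; split_ifs with h
    · exact fun h' => hαβ 1 le_rfl (by omega) ⟨h, h'⟩
    · exact h
  set X0 : V := if α 1 = 0 then v else u with hX0
  have hX0W : X0 ∈ W 0 1 := by rw [hX0]; split_ifs; exacts [hv, hu]
  have hX0g : X0 ∈ A.g 0 := hWsub 0 1 hX0W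
  have hX0Z : ∀ k, 1 ≤ k → k + 1 ≤ m → A.bk X0 (Z k) = (lam k * δ) • Z (k+1) := by
    intro k h1 h2
    obtain ⟨hlne, hla, hlb⟩ := hlam k h1 h2
    rw [hX0, hδ]; split_ifs with h
    · rw [hβ k h1 h2, hlb]
    · rw [hα k h1 h2, hla]
  have hlamδ : ∀ k, 1 ≤ k → k + 1 ≤ m → lam k * δ ≠ 0 := fun k h1 h2 =>
    mul_ne_zero (hlam k h1 h2).1 hδne
  set s : ℂ := -c / (δ * ω) with hs
  have hsne : s ≠ 0 := by
    rw [hs]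
    exact div_ne_zero (neg_ne_zero.mpr hcne) (mul_ne_zero hδne hωne)
  set X1 : V := s • (β 1 • u - α 1 • v) with hX1
  have hX1W : X1 ∈ W 0 1 := by
    rw [hX1]
    exact Submodule.smul_mem _ s
      (Submodule.sub_mem _ (Submodule.smul_mem _ _ hu) (Submodule.smul_mem _ _ hv))
  have hX1g : X1 ∈ A.g 0 := hWsub 0 1 hX1W
  set X2 : V := c • T with hX2def
  have hX2W : X2 ∈ W 0 2 := Submodule.smul_mem _ c hT
  have hX2g : X2 ∈ A.g 0 := hWsub 0 2 hX2W
  have hX2ne : X2 ≠ 0 := by rw [hX2def]; exact smul_ne_zero hcne hTne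
  have hZ11X2 : A.bk (Z 1) (Z 1) = X2 := by rw [hX2def]; exact hc
  have hkey : -(s * (δ * ω)) = c := by rw [hs]; field_simp
  have hbkX0X1 : A.bk X0 X1 = X2 := by
    rw [hX1, map_smul, hX0]
    by_cases h : α 1 = 0
    · rw [if_pos h]
      have hvu : A.bk v u = -(ω • T) := by rw [hskew_ee u hug v hvg, hω]
      rw [map_sub, map_smul, map_smul, hvu, hsq_ee v hvg, h]
      rw [hX2def, ← hkey, hδ, if_pos h]
      module
    · rw [if_neg h]
      rw [map_sub, map_smul, map_smul, hω, hsq_ee u hug]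
      rw [hX2def, ← hkey, hδ, if_neg h]
      module
  have hX1Z : ∀ k, 1 ≤ k → k + 1 ≤ m → A.bk X1 (Z k) = 0 := by
    intro k h1 h2
    obtain ⟨hlne, hla, hlb⟩ := hlam k h1 h2
    rw [hX1, map_smul, LinearMap.smul_apply, map_sub, LinearMap.sub_apply,
      map_smul, map_smul, LinearMap.smul_apply, LinearMap.smul_apply,
      hα k h1 h2, hβ k h1 h2, hla, hlb]
    module
  -- ## Part E : the odd basis vectors Y
  set Y : ℕ → V := fun n => Nat.rec (motive := fun _ => V) 0
    (fun k ih => if k = 0 then Z 1 else A.bk X0 ih) n with hYdef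
  have hY1 : Y 1 = Z 1 := rfl
  have hYs : ∀ k, 1 ≤ k → Y (k+1) = A.bk X0 (Y k) := by
    intro k hk
    obtain ⟨j, rfl⟩ : ∃ j, k = j + 1 := ⟨k - 1, by omega⟩
    rfl
  have hYrepex : ∀ k : ℕ, ∃ ν : ℂ, 1 ≤ k → k ≤ m → ν ≠ 0 ∧ Y k = ν • Z k := by
    intro k
    induction k with
    | zero => exact ⟨0, by omega⟩
    | succ n ih =>
      by_cases hn : 1 ≤ n
      · by_cases hnm : n + 1 ≤ m
        · obtain ⟨t, ht⟩ := ih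
          obtain ⟨htne, hty⟩ := ht hn (by omega)
          refine ⟨t * (lam n * δ), fun _ _ => ⟨mul_ne_zero htne (hlamδ n hn hnm), ?_⟩⟩
          rw [hYs n hn, hty, map_smul, hX0Z n hn hnm, smul_smul]
        · exact ⟨0, fun _ h2 => absurd h2 (by omega)⟩
      · have hn0 : n = 0 := by omega
        subst hn0
        exact ⟨1, fun _ _ => ⟨one_ne_zero, by show Y 1 = (1:ℂ) • Z 1; rw [hY1, one_smul]⟩⟩
  choose ν hν using hYrepex
  have hνne : ∀ k, 1 ≤ k → k ≤ m → ν k ≠ 0 := fun k h1 h2 => (hν k h1 h2).1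
  have hYZ : ∀ k, 1 ≤ k → k ≤ m → Y k = ν k • Z k := fun k h1 h2 => (hν k h1 h2).2
  have hYW : ∀ k, 1 ≤ k → k ≤ m → Y k ∈ W 1 k := fun k h1 h2 => by
    rw [hYZ k h1 h2]; exact Submodule.smul_mem _ _ (hZW k h1 h2)
  have hYg : ∀ k, 1 ≤ k → k ≤ m → Y k ∈ A.g 1 := fun k h1 h2 => hWsub 1 k (hYW k h1 h2)
  -- remaining bracket values
  have hbkW1m : ∀ x ∈ W 0 1, A.bk x (Z m) = 0 := by
    intro x hx
    have h := hbk01 1 m x hx (Z m) (hZW m (by omega) le_rfl)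
    rw [show 1 + m = m + 1 by omega, hWb1 (m+1) le_rfl, Submodule.mem_bot] at h
    exact h
  have hbkX0Ym : A.bk X0 (Y m) = 0 := by
    rw [hYZ m (by omega) le_rfl, map_smul, hbkW1m X0 hX0W, smul_zero]
  have hbkX1Y : ∀ j, 1 ≤ j → j ≤ m → A.bk X1 (Y j) = 0 := by
    intro j h1 h2
    rw [hYZ j h1 h2, map_smul]
    by_cases h : j + 1 ≤ m
    · rw [hX1Z j h1 h, smul_zero]
    · have : j = m := by omega
      subst this
      rw [hbkW1m X1 hX1W, smul_zero]
  have hbkX2Y : ∀ j, 1 ≤ j → j ≤ m → A.bk X2 (Y j) = 0 := by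
    intro j h1 h2
    simp only [hYZ j h1 h2, hX2def, map_smul, LinearMap.smul_apply,
      hTZ j h1 h2, smul_zero]
  have hbkYY : ∀ i j, 1 ≤ i → i ≤ m → 1 ≤ j → j ≤ m → ¬(i = 1 ∧ j = 1) →
      A.bk (Y i) (Y j) = 0 := by
    intro i j h1i h2i h1j h2j hne
    simp only [hYZ i h1i h2i, hYZ j h1j h2j, map_smul, LinearMap.smul_apply,
      oddW i j (by omega) (Z i) (hZW i h1i h2i) (Z j) (hZW j h1j h2j), smul_zero]
  have eX0X2 : A.bk X0 X2 = 0 := by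
    rw [hX2def, map_smul, hbk_g0_W02 X0 hX0g T hT, smul_zero]
  have eX1X2 : A.bk X1 X2 = 0 := by
    rw [hX2def, map_smul, hbk_g0_W02 X1 hX1g T hT, smul_zero]
  have eX2X0 : A.bk X2 X0 = 0 := by
    rw [hskew_ee X0 hX0g X2 hX2g, eX0X2, neg_zero]
  have eX2X1 : A.bk X2 X1 = 0 := by
    rw [hskew_ee X1 hX1g X2 hX2g, eX1X2, neg_zero]
  -- ## Part F : assembly
  set Xf : ℕ → V := fun i => if i = 0 then X0 else if i = 1 then X1 else X2 with hXf
  set F : (Fin (2+1) ⊕ Fin m) → V :=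
    Sum.elim (fun i : Fin (2+1) => Xf i.val) (fun j : Fin m => Y (j.val + 1)) with hF
  set P : Submodule ℂ V := Submodule.span ℂ (Set.range F) with hP
  have hmemX0 : X0 ∈ P := Submodule.subset_span ⟨Sum.inl ⟨0, by omega⟩, rfl⟩
  have hmemX1 : X1 ∈ P := Submodule.subset_span ⟨Sum.inl ⟨1, by omega⟩, rfl⟩
  have hmemX2 : X2 ∈ P := Submodule.subset_span ⟨Sum.inl ⟨2, by omega⟩, rfl⟩
  have hmemY : ∀ j, j < m → Y (j+1) ∈ P := fun j hj =>
    Submodule.subset_span ⟨Sum.inr ⟨j, hj⟩, rfl⟩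
  have hW01P : W 0 1 ≤ P := by
    intro x hx
    obtain ⟨a, b, rfl⟩ := hrep x hx
    have hβ1u : α 1 = 0 → u ∈ P := by
      intro h
      have hβ1ne : β 1 ≠ 0 := fun h' => hαβ 1 le_rfl (by omega) ⟨h, h'⟩
      have e : X1 = (s * β 1) • u := by rw [hX1, h]; module
      have e2 : u = (s * β 1)⁻¹ • X1 := by
        rw [e, smul_smul, inv_mul_cancel₀ (mul_ne_zero hsne hβ1ne), one_smul]
      rw [e2]; exact P.smul_mem _ hmemX1
    have huP : u ∈ P := by
      by_cases h : α 1 = 0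
      · exact hβ1u h
      · have : X0 = u := by rw [hX0, if_neg h]
        rw [← this]; exact hmemX0
    have hvP : v ∈ P := by
      by_cases h : α 1 = 0
      · have : X0 = v := by rw [hX0, if_pos h]
        rw [← this]; exact hmemX0
      · have e : (s * α 1)⁻¹ • ((s * β 1) • u - X1) = v := by
          rw [hX1]
          match_scalars
          · field_simp; ring
          · field_simp
        rw [← e]
        exact P.smul_mem _ (P.sub_mem (P.smul_mem _ huP) hmemX1)
    exact P.add_mem (P.smul_mem a huP) (P.smul_mem b hvP)
  have hTP : T ∈ P := by
    have e : T = c⁻¹ • X2 := by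
      rw [hX2def, smul_smul, inv_mul_cancel₀ hcne, one_smul]
    rw [e]; exact P.smul_mem _ hmemX2
  have hW02P : W 0 2 ≤ P := by
    intro t ht
    obtain ⟨e, rfl⟩ := hTgen t ht
    exact P.smul_mem _ hTP
  have hZP : ∀ k, 1 ≤ k → k ≤ m → Z k ∈ P := by
    intro k h1 h2
    have e : Z k = (ν k)⁻¹ • Y k := by
      rw [hYZ k h1 h2, smul_smul, inv_mul_cancel₀ (hνne k h1 h2), one_smul]
    rw [e]
    obtain ⟨j, rfl⟩ : ∃ j, k = j + 1 := ⟨k - 1, by omega⟩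
    exact P.smul_mem _ (hmemY j (by omega))
  have hW1P : ∀ k, 1 ≤ k → k ≤ m → W 1 k ≤ P := by
    intro k h1 h2 x hx
    obtain ⟨e, rfl⟩ := hZgen k h1 h2 x hx
    exact P.smul_mem _ (hZP k h1 h2)
  have hC1P : ∀ t k, m ≤ k + t → A.C 1 k ≤ P := by
    intro t
    induction t with
    | zero =>
      intro k hk
      rw [hCbot1 k (by omega)]; exact bot_le
    | succ n ih =>
      intro k hk
      by_cases hmk : m ≤ k
      · rw [hCbot1 k hmk]; exact bot_le
      · rw [hC 1 k]
        exact sup_le (hW1P (k+1) (by omega) (by omega)) (ih (k+1) (by omega))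
  have hspan : Submodule.span ℂ (Set.range F) = ⊤ := by
    rw [eq_top_iff]
    intro w _
    have htop : w ∈ A.g 0 ⊔ A.g 1 := by rw [A.compl.sup_eq_top]; trivial
    obtain ⟨w0, hw0, w1, hw1, rfl⟩ := Submodule.mem_sup.mp htop
    have hg0P : w0 ∈ P := by
      obtain ⟨x1, hx1, x2, hx2, rfl⟩ := hg0dec w0 hw0
      exact P.add_mem (hW01P hx1) (hW02P hx2)
    have hg1P : w1 ∈ P := by
      have h := hC1P m 0 (by omega)
      rw [hC0 1] at h
      exact h hw1
    exact P.add_mem hg0P hg1P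
  have hcard : Fintype.card (Fin (2+1) ⊕ Fin m) = Module.finrank ℂ V := by
    rw [Fintype.card_sum, Fintype.card_fin, Fintype.card_fin,
      ← Submodule.finrank_add_eq_of_isCompl A.compl, hg0, hg1]
  have hindepF : LinearIndependent ℂ F :=
    linearIndependent_of_top_le_span_of_card_eq_finrank (ge_of_eq hspan) hcard
  refine ⟨Xf, Y, ⟨?_, fun j h1 h2 => hYg j h1 h2, hindepF, hspan⟩, ?_, ?_, ?_⟩
  · -- X i ∈ g 0
    intro i hi
    interval_cases i
    · exact hX0g
    · exact hX1g
    · exact hX2g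
  · -- even-even products
    intro i j hi hj
    interval_cases i <;> interval_cases j <;> norm_num
    · exact hsq_ee X0 hX0g
    · exact hbkX0X1
    · exact eX0X2
    · show A.bk X1 X0 = -X2
      rw [hskew_ee X0 hX0g X1 hX1g, hbkX0X1]
    · exact hsq_ee X1 hX1g
    · exact eX1X2
    · exact eX2X0
    · exact eX2X1
    · exact hsq_ee X2 hX2g
  · -- even-odd products
    intro i j hi h1j h2j
    interval_cases i
    · norm_num
      by_cases h : j + 1 ≤ m
      · rw [if_pos (by omega : j < m)]
        exact (hYs j h1j).symm
      · rw [if_neg (by omega : ¬ j < m)]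
        have : j = m := by omega
        subst this
        exact hbkX0Ym
    · norm_num
      exact hbkX1Y j h1j h2j
    · norm_num
      exact hbkX2Y j h1j h2j
  · -- odd-odd products
    intro i j h1i h2i h1j h2j
    by_cases h : i = 1 ∧ j = 1
    · obtain ⟨rfl, rfl⟩ := h
      rw [if_pos ⟨rfl, rfl⟩, hY1, hZ11X2]
      rfl
    · rw [if_neg h]
      exact hbkYY i j h1i h2i h1j h2j h
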